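/- In a location-family random utility model on m ≥ 2 alternatives with measurable probability densities f_1,…,f_m that are strictly positive everywhere on ℝ, let D = (π^1,…,π^n) be data satisfying Condition 1: for every partition of {1,…,m} into two nonempty disjoint sets C_1 and C_2, there exist c_1 ∈ C_1, c_2 ∈ C_2, and some ranking π^i in D in which c_1 is ranked above c_2. Then the set S_D = {θ ∈ ℝ^m : θ_1 = 0 and l(θ;D) ≥ l(θ′;D) for all θ′ ∈ ℝ^m with θ′_1 = 0} of global maximizers of the log-likelihood on the hyperplane {θ_1 = 0} is bounded. -/

import Mathlib

open MeasureTheory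

/-- The probability that the ranking `π` is realized in a location-family random
utility model with noise densities `f j` and location parameters `θ j`. -/
noncomputable def rumProb {m : ℕ} (f : Fin m → ℝ → ℝ) (θ : Fin m → ℝ)
    (π : Equiv.Perm (Fin m)) : ℝ :=
  ∫ x in {x : Fin m → ℝ | ∀ k l : Fin m, k < l → x (π l) < x (π k)},
    ∏ j, f j (x j - θ j)

open Filter
lemma aux_int {g : ℝ → ℝ} (h : ∫ x, g x = 1) : Integrable g := by
  by_contra hc
  rw [integral_undef hc] at h
  exact zero_ne_one h

lemma aux_gInt {m : ℕ} (f : Fin m → ℝ → ℝ) (hfi : ∀ j, Integrable (f j)) (θ : Fin m → ℝ) :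
    Integrable (fun x : Fin m → ℝ => ∏ j, f j (x j - θ j)) :=
  Integrable.fintype_prod_dep (fun j => (hfi j).comp_sub_right (θ j))

lemma aux_g0Int {m : ℕ} (f : Fin m → ℝ → ℝ) (hfi : ∀ j, Integrable (f j)) :
    Integrable (fun x : Fin m → ℝ => ∏ j, f j (x j)) :=
  Integrable.fintype_prod_dep hfi

lemma aux_g0Meas {m : ℕ} (f : Fin m → ℝ → ℝ) (hmeas : ∀ j, Measurable (f j)) :
    Measurable (fun x : Fin m → ℝ => ∏ j, f j (x j)) :=
  Finset.measurable_prod _ fun j _ => (hmeas j).comp (measurable_pi_apply j)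

lemma aux_pos {m : ℕ} (f : Fin m → ℝ → ℝ)
    (hpos : ∀ j x, 0 < f j x) (hfi : ∀ j, Integrable (f j))
    (θ : Fin m → ℝ) (π : Equiv.Perm (Fin m)) : 0 < rumProb f θ π := by
  unfold rumProb
  set A := {x : Fin m → ℝ | ∀ k l : Fin m, k < l → x (π l) < x (π k)} with hA
  have hgi : Integrable (fun x : Fin m → ℝ => ∏ j, f j (x j - θ j)) := aux_gInt f hfi θ
  have hgpos : ∀ x : Fin m → ℝ, 0 < ∏ j, f j (x j - θ j) :=
    fun x => Finset.prod_pos fun j _ => hpos j _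
  have hnn : (0 : (Fin m → ℝ) → ℝ) ≤ᵐ[volume.restrict A] fun x => ∏ j, f j (x j - θ j) :=
    Filter.Eventually.of_forall fun x => (hgpos x).le
  rw [setIntegral_pos_iff_support_of_nonneg_ae hnn hgi.integrableOn]
  have hsupp : Function.support (fun x : Fin m → ℝ => ∏ j, f j (x j - θ j)) ∩ A = A :=
    Set.inter_eq_right.mpr fun x _ => (hgpos x).ne'
  rw [hsupp]
  have hAopen : IsOpen A := by
    have h2 : A = ⋂ (k : Fin m), ⋂ (l : Fin m), ⋂ (_ : k < l),
        {x : Fin m → ℝ | x (π l) < x (π k)} := by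
      ext x; simp [hA, Set.mem_iInter]
    rw [h2]
    exact isOpen_iInter_of_finite fun k => isOpen_iInter_of_finite fun l =>
      isOpen_iInter_of_finite fun _ => isOpen_lt (continuous_apply _) (continuous_apply _)
  have hAne : A.Nonempty := by
    refine ⟨fun j => -((π.symm j : ℕ) : ℝ), fun k l hkl => ?_⟩
    simp only [Equiv.symm_apply_apply]
    exact neg_lt_neg (by exact_mod_cast (hkl : (k : ℕ) < (l : ℕ)))
  exact hAopen.measure_pos volume hAne

lemma aux_le_one {m : ℕ} (f : Fin m → ℝ → ℝ)
    (hpos : ∀ j x, 0 < f j x) (hfi : ∀ j, Integrable (f j)) (hint : ∀ j, ∫ x, f j x = 1)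
    (θ : Fin m → ℝ) (π : Equiv.Perm (Fin m)) : rumProb f θ π ≤ 1 := by
  unfold rumProb
  have hgi : Integrable (fun x : Fin m → ℝ => ∏ j, f j (x j - θ j)) := aux_gInt f hfi θ
  have h1 : ∫ x : Fin m → ℝ, ∏ j, f j (x j - θ j) = 1 := by
    calc ∫ x : Fin m → ℝ, ∏ j, f j (x j - θ j) = ∏ j, ∫ t, f j (t - θ j) :=
          integral_fintype_prod_eq_prod (fun j (t : ℝ) => f j (t - θ j))
      _ = 1 := Finset.prod_eq_one fun j _ => by
          rw [integral_sub_right_eq_self (f j) (θ j)]; exact hint j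
  rw [← h1]
  exact setIntegral_le_integral hgi
    (Filter.Eventually.of_forall fun x => (Finset.prod_pos fun j _ => hpos j _).le)

noncomputable def tailInt {m : ℕ} (f : Fin m → ℝ → ℝ) (a b : Fin m) (s : ℝ) : ℝ :=
  ∫ y : Fin m → ℝ,
    Set.indicator {y : Fin m → ℝ | y b - y a < s} (fun y => ∏ j, f j (y j)) y

lemma aux_Smeas {m : ℕ} (a b : Fin m) (s : ℝ) :
    MeasurableSet {y : Fin m → ℝ | y b - y a < s} :=
  measurableSet_lt ((measurable_pi_apply b).sub (measurable_pi_apply a)) measurable_const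

lemma tailInt_mono {m : ℕ} (f : Fin m → ℝ → ℝ)
    (hpos : ∀ j x, 0 < f j x) (hfi : ∀ j, Integrable (f j))
    (a b : Fin m) {s s' : ℝ} (h : s ≤ s') : tailInt f a b s ≤ tailInt f a b s' := by
  unfold tailInt
  have hnn : ∀ y : Fin m → ℝ, 0 ≤ ∏ j, f j (y j) :=
    fun y => (Finset.prod_pos fun j _ => hpos j _).le
  refine integral_mono ((aux_g0Int f hfi).indicator (aux_Smeas a b s))
    ((aux_g0Int f hfi).indicator (aux_Smeas a b s')) ?_
  exact Set.indicator_le_indicator_of_subset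
    (fun y (hy : y b - y a < s) => lt_of_lt_of_le hy h) hnn

lemma tailInt_tendsto {m : ℕ} (f : Fin m → ℝ → ℝ)
    (hmeas : ∀ j, Measurable (f j)) (hpos : ∀ j x, 0 < f j x) (hfi : ∀ j, Integrable (f j))
    (a b : Fin m) :
    Tendsto (fun k : ℕ => tailInt f a b (-(k : ℝ))) atTop (nhds 0) := by
  have hnn : ∀ y : Fin m → ℝ, 0 ≤ ∏ j, f j (y j) :=
    fun y => (Finset.prod_pos fun j _ => hpos j _).le
  have := tendsto_integral_of_dominated_convergence
    (μ := (volume : Measure (Fin m → ℝ)))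
    (F := fun k : ℕ => Set.indicator {y : Fin m → ℝ | y b - y a < -(k : ℝ)}
      (fun y => ∏ j, f j (y j)))
    (f := fun _ => (0 : ℝ))
    (fun y => ∏ j, f j (y j))
    (fun k => ((aux_g0Meas f hmeas).indicator (aux_Smeas a b _)).aestronglyMeasurable)
    (aux_g0Int f hfi)
    (fun k => Filter.Eventually.of_forall fun y => by
      rw [Real.norm_eq_abs, abs_of_nonneg (Set.indicator_nonneg (fun y _ => hnn y) y)]
      exact Set.indicator_le_self' (fun y _ => hnn y) y)
    (Filter.Eventually.of_forall fun y => by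
      have hev : ∀ᶠ k : ℕ in atTop,
          Set.indicator {y : Fin m → ℝ | y b - y a < -(k : ℝ)}
            (fun y => ∏ j, f j (y j)) y = 0 := by
        obtain ⟨N, hN⟩ := exists_nat_ge (-(y b - y a))
        refine Filter.eventually_atTop.2 ⟨N, fun k hk => ?_⟩
        apply Set.indicator_of_notMem
        simp only [Set.mem_setOf_eq, not_lt]
        have hNk : (N : ℝ) ≤ (k : ℝ) := Nat.cast_le.mpr hk
        linarith
      have hev' : (fun k : ℕ => Set.indicator {y : Fin m → ℝ | y b - y a < -(k : ℝ)}
          (fun y => ∏ j, f j (y j)) y) =ᶠ[atTop] fun _ => (0 : ℝ) := hev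
      exact Filter.Tendsto.congr' hev'.symm tendsto_const_nhds)
  simpa [tailInt] using this

lemma aux_bound {m : ℕ} (f : Fin m → ℝ → ℝ)
    (hpos : ∀ j x, 0 < f j x) (hfi : ∀ j, Integrable (f j))
    (θ : Fin m → ℝ) (π : Equiv.Perm (Fin m)) (a b : Fin m)
    (hab : π.symm a < π.symm b) : rumProb f θ π ≤ tailInt f a b (θ a - θ b) := by
  have hnnθ : ∀ x : Fin m → ℝ, 0 ≤ ∏ j, f j (x j - θ j) :=
    fun x => (Finset.prod_pos fun j _ => hpos j _).le
  set A := {x : Fin m → ℝ | ∀ k l : Fin m, k < l → x (π l) < x (π k)} with hA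
  set S := {x : Fin m → ℝ | x b < x a} with hS
  have hAmeas : MeasurableSet A := by
    have h2 : A = ⋂ (k : Fin m), ⋂ (l : Fin m), ⋂ (_ : k < l),
        {x : Fin m → ℝ | x (π l) < x (π k)} := by
      ext x; simp [hA, Set.mem_iInter]
    rw [h2]
    exact MeasurableSet.iInter fun k => MeasurableSet.iInter fun l =>
      MeasurableSet.iInter fun _ =>
        measurableSet_lt (measurable_pi_apply _) (measurable_pi_apply _)
  have hSmeas : MeasurableSet S :=
    measurableSet_lt (measurable_pi_apply b) (measurable_pi_apply a)
  have hAS : A ⊆ S := by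
    intro x hx
    have := hx (π.symm a) (π.symm b) hab
    exact (by simpa using this : x b < x a)
  calc rumProb f θ π
      = ∫ x, Set.indicator A (fun x => ∏ j, f j (x j - θ j)) x :=
        (integral_indicator hAmeas).symm
    _ ≤ ∫ x, Set.indicator S (fun x => ∏ j, f j (x j - θ j)) x := by
        refine integral_mono ((aux_gInt f hfi θ).indicator hAmeas)
          ((aux_gInt f hfi θ).indicator hSmeas) ?_
        exact Set.indicator_le_indicator_of_subset hAS hnnθ
    _ = ∫ x, Set.indicator {y : Fin m → ℝ | y b - y a < θ a - θ b}
          (fun y => ∏ j, f j (y j)) (x - θ) := by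
        congr 1
        funext x
        by_cases hx : x ∈ S
        · rw [Set.indicator_of_mem hx, Set.indicator_of_mem]
          · rfl
          · have : x b < x a := hx
            show (x - θ) b - (x - θ) a < θ a - θ b
            simp only [Pi.sub_apply]
            linarith
        · rw [Set.indicator_of_notMem hx, Set.indicator_of_notMem]
          intro hmem
          apply hx
          have : (x - θ) b - (x - θ) a < θ a - θ b := hmem
          simp only [Pi.sub_apply] at this
          show x b < x a
          linarith
    _ = tailInt f a b (θ a - θ b) := integral_sub_right_eq_self _ θ

lemma ereal_coe_sum {ι : Type*} (s : Finset ι) (g : ι → ℝ) :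
    ((∑ i ∈ s, g i : ℝ) : EReal) = ∑ i ∈ s, ((g i : ℝ) : EReal) := by
  induction s using Finset.cons_induction with
  | empty => simp
  | cons a s ha ih => rw [Finset.sum_cons, Finset.sum_cons, EReal.coe_add, ih]

/-- The log-likelihood of data `D` of rankings, valued in the extended reals
(so that rankings of probability `0` contribute `⊥ = −∞`). -/
noncomputable def logLik {m n : ℕ} (f : Fin m → ℝ → ℝ)
    (D : Fin n → Equiv.Perm (Fin m)) (θ : Fin m → ℝ) : EReal :=
  ∑ i, ENNReal.log (ENNReal.ofReal (rumProb f θ (D i)))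

/-- The set of global maximizers of the log-likelihood on the hyperplane where the
parameter of the first alternative is fixed to `0`. -/
noncomputable def maxSet {m n : ℕ} (hm : 0 < m) (f : Fin m → ℝ → ℝ)
    (D : Fin n → Equiv.Perm (Fin m)) : Set (Fin m → ℝ) :=
  {θ | θ ⟨0, hm⟩ = 0 ∧
    ∀ θ' : Fin m → ℝ, θ' ⟨0, hm⟩ = 0 → logLik f D θ' ≤ logLik f D θ}

/-- If the data satisfies Condition 1 (for every partition of the alternatives into
two nonempty sets, some ranking in the data places some alternative of the first set
above some alternative of the second set), then the set of global maximizers of the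
log-likelihood on the hyperplane `θ_1 = 0` is bounded. Alternative `c₁` is ranked
above `c₂` in the ranking `π` iff `π.symm c₁ < π.symm c₂`. -/
theorem stmt8 (m : ℕ) (hm : 2 ≤ m) (f : Fin m → ℝ → ℝ)
    (hmeas : ∀ j, Measurable (f j))
    (hpos : ∀ j x, 0 < f j x)
    (hint : ∀ j, ∫ x, f j x = 1)
    (n : ℕ) (D : Fin n → Equiv.Perm (Fin m))
    (hcond : ∀ C1 C2 : Set (Fin m), C1.Nonempty → C2.Nonempty →
      Disjoint C1 C2 → C1 ∪ C2 = Set.univ →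
      ∃ c1 ∈ C1, ∃ c2 ∈ C2, ∃ i : Fin n, (D i).symm c1 < (D i).symm c2) :
    Bornology.IsBounded (maxSet (by omega) f D) := by
  haveI : Nonempty (Fin m) := ⟨⟨0, by omega⟩⟩
  have hfi : ∀ j, Integrable (f j) := fun j => aux_int (hint j)
  set L0 : ℝ := ∑ i, Real.log (rumProb f 0 (D i)) with hL0def
  have hL0 : logLik f D 0 = (L0 : EReal) := by
    rw [hL0def, ereal_coe_sum]
    unfold logLik
    refine Finset.sum_congr rfl fun i _ => ?_
    rw [ENNReal.log_ofReal_of_pos (aux_pos f hpos hfi 0 (D i))]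
  set δ : ℝ := Real.exp (L0 - 1) with hδdef
  have hδpos : 0 < δ := Real.exp_pos _
  have hthr : ∀ a b : Fin m, ∃ T : ℝ, 0 ≤ T ∧ ∀ s : ℝ, s ≤ -T → tailInt f a b s < δ := by
    intro a b
    have h1 := (tailInt_tendsto f hmeas hpos hfi a b).eventually (gt_mem_nhds hδpos)
    obtain ⟨N, hN⟩ := Filter.eventually_atTop.1 h1
    refine ⟨N, Nat.cast_nonneg N, fun s hs => ?_⟩
    exact lt_of_le_of_lt (tailInt_mono f hpos hfi a b hs) (hN N le_rfl)
  choose T hT0 hTδ using hthr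
  set T' : ℝ := 1 + ∑ a : Fin m, ∑ b : Fin m, T a b with hT'def
  have hsum_nn : 0 ≤ ∑ a : Fin m, ∑ b : Fin m, T a b :=
    Finset.sum_nonneg fun a _ => Finset.sum_nonneg fun b _ => hT0 a b
  have hT'pos : 0 < T' := by rw [hT'def]; linarith
  have hT'ge : ∀ a b : Fin m, T a b ≤ T' := by
    intro a b
    have h1 : T a b ≤ ∑ b' : Fin m, T a b' :=
      Finset.single_le_sum (fun b' _ => hT0 a b') (Finset.mem_univ b)
    have h2 : (∑ b' : Fin m, T a b') ≤ ∑ a' : Fin m, ∑ b' : Fin m, T a' b' :=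
      Finset.single_le_sum (fun a' _ => Finset.sum_nonneg fun b' _ => hT0 a' b')
        (Finset.mem_univ a)
    rw [hT'def]; linarith
  set R : ℝ := m * T' with hRdef
  have hRnn : 0 ≤ R := by
    rw [hRdef]; exact mul_nonneg (Nat.cast_nonneg m) hT'pos.le
  refine (Metric.isBounded_closedBall (x := (0 : Fin m → ℝ)) (r := R)).subset ?_
  intro θ hθ
  obtain ⟨hθ0, hθmax⟩ := hθ
  rw [Metric.mem_closedBall, dist_pi_le_iff hRnn]
  intro j
  rw [Real.dist_eq, Pi.zero_apply, sub_zero]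
  by_contra hj
  push_neg at hj
  obtain ⟨ja, -, hja⟩ := Finset.exists_min_image Finset.univ θ Finset.univ_nonempty
  obtain ⟨jb, -, hjb⟩ := Finset.exists_max_image Finset.univ θ Finset.univ_nonempty
  have hamin_le : ∀ j', θ ja ≤ θ j' := fun j' => hja j' (Finset.mem_univ j')
  have hle_bmax : ∀ j', θ j' ≤ θ jb := fun j' => hjb j' (Finset.mem_univ j')
  have h0a : θ ja ≤ 0 := by have := hamin_le ⟨0, by omega⟩; rwa [hθ0] at this
  have h0b : 0 ≤ θ jb := by have := hle_bmax ⟨0, by omega⟩; rwa [hθ0] at this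
  have hspread : R < θ jb - θ ja := by
    rcases le_or_gt 0 (θ j) with h | h
    · rw [abs_of_nonneg h] at hj; linarith [hle_bmax j]
    · rw [abs_of_neg h] at hj; linarith [hamin_le j]
  have hgap : ∃ k : ℕ, k + 1 ≤ m ∧
      ∀ j', θ j' ≤ θ ja + (k : ℝ) * T' ∨ θ ja + ((k : ℝ) + 1) * T' < θ j' := by
    by_contra hcon
    push_neg at hcon
    have hcon' : ∀ k : Fin m, ∃ j',
        θ ja + ((k : ℕ) : ℝ) * T' < θ j' ∧ θ j' ≤ θ ja + (((k : ℕ) : ℝ) + 1) * T' :=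
      fun k => hcon (k : ℕ) k.isLt
    choose φ h1 h2 using hcon'
    have key : ∀ p q : Fin m, p < q → φ p = φ q → False := by
      intro p q hpq heq
      have hc : ((p : ℕ) : ℝ) + 1 ≤ ((q : ℕ) : ℝ) := by
        exact_mod_cast Nat.succ_le_of_lt hpq
      have hm1 : (((p : ℕ) : ℝ) + 1) * T' ≤ ((q : ℕ) : ℝ) * T' :=
        mul_le_mul_of_nonneg_right hc hT'pos.le
      have hp2 := h2 p
      have hq1 := h1 q
      rw [← heq] at hq1
      linarith
    have hinj : Function.Injective φ := by
      intro p q hpq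
      by_contra hne
      rcases lt_or_gt_of_ne hne with h | h
      · exact key p q h hpq
      · exact key q p h hpq.symm
    obtain ⟨k, hk⟩ := Finite.injective_iff_surjective.mp hinj ja
    have h1k := h1 k
    rw [hk] at h1k
    have hnn : (0 : ℝ) ≤ ((k : ℕ) : ℝ) * T' :=
      mul_nonneg (Nat.cast_nonneg _) hT'pos.le
    linarith
  obtain ⟨k, hkm, hk2⟩ := hgap
  have hknn : (0 : ℝ) ≤ (k : ℝ) * T' := mul_nonneg (Nat.cast_nonneg _) hT'pos.le
  have hexp : ((k : ℝ) + 1) * T' = (k : ℝ) * T' + T' := by ring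
  have hC1ne : ({j' | θ j' ≤ θ ja + (k : ℝ) * T'} : Set (Fin m)).Nonempty :=
    ⟨ja, by simp only [Set.mem_setOf_eq]; linarith⟩
  have hC2ne : ({j' | θ ja + ((k : ℝ) + 1) * T' < θ j'} : Set (Fin m)).Nonempty := by
    refine ⟨jb, ?_⟩
    simp only [Set.mem_setOf_eq]
    have h1 : ((k : ℝ) + 1) * T' ≤ (m : ℝ) * T' := by
      apply mul_le_mul_of_nonneg_right _ hT'pos.le
      exact_mod_cast hkm
    have hR' : R = (m : ℝ) * T' := hRdef
    linarith
  have hdis : Disjoint ({j' | θ j' ≤ θ ja + (k : ℝ) * T'} : Set (Fin m))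
      ({j' | θ ja + ((k : ℝ) + 1) * T' < θ j'} : Set (Fin m)) := by
    rw [Set.disjoint_left]
    intro j' hj1 hj2
    simp only [Set.mem_setOf_eq] at hj1 hj2
    linarith
  have huniv : ({j' | θ j' ≤ θ ja + (k : ℝ) * T'} : Set (Fin m)) ∪
      ({j' | θ ja + ((k : ℝ) + 1) * T' < θ j'} : Set (Fin m)) = Set.univ :=
    Set.eq_univ_of_forall fun j' => (hk2 j').elim (fun h => Or.inl h) (fun h => Or.inr h)
  obtain ⟨c1, hc1, c2, hc2, i0, hrank⟩ := hcond _ _ hC1ne hC2ne hdis huniv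
  simp only [Set.mem_setOf_eq] at hc1 hc2
  have hsmall : rumProb f θ (D i0) < δ := by
    refine lt_of_le_of_lt (aux_bound f hpos hfi θ (D i0) c1 c2 hrank) ?_
    apply hTδ c1 c2
    have := hT'ge c1 c2
    linarith
  have hterm_le : ∀ i, ENNReal.log (ENNReal.ofReal (rumProb f θ (D i))) ≤ (0 : EReal) := by
    intro i
    have h1 : ENNReal.ofReal (rumProb f θ (D i)) ≤ 1 :=
      ENNReal.ofReal_le_one.mpr (aux_le_one f hpos hfi hint θ (D i))
    calc ENNReal.log (ENNReal.ofReal (rumProb f θ (D i))) ≤ ENNReal.log 1 :=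
          ENNReal.log_monotone h1
      _ = 0 := ENNReal.log_one
  have hub : logLik f D θ ≤ ENNReal.log (ENNReal.ofReal (rumProb f θ (D i0))) := by
    unfold logLik
    rw [← Finset.add_sum_erase _ _ (Finset.mem_univ i0)]
    have hrest : (∑ i ∈ Finset.univ.erase i0,
        ENNReal.log (ENNReal.ofReal (rumProb f θ (D i)))) ≤ (0 : EReal) :=
      Finset.sum_nonpos fun i _ => hterm_le i
    calc ENNReal.log (ENNReal.ofReal (rumProb f θ (D i0))) +
          (∑ i ∈ Finset.univ.erase i0, ENNReal.log (ENNReal.ofReal (rumProb f θ (D i))))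
        ≤ ENNReal.log (ENNReal.ofReal (rumProb f θ (D i0))) + 0 := add_le_add le_rfl hrest
      _ = ENNReal.log (ENNReal.ofReal (rumProb f θ (D i0))) := add_zero _
  have hpθ : 0 < rumProb f θ (D i0) := aux_pos f hpos hfi θ (D i0)
  have hlt : ENNReal.log (ENNReal.ofReal (rumProb f θ (D i0))) < (L0 : EReal) := by
    rw [ENNReal.log_ofReal_of_pos hpθ]
    have h1 : Real.log (rumProb f θ (D i0)) < L0 - 1 := by
      have := Real.log_lt_log hpθ hsmall
      rwa [hδdef, Real.log_exp] at this
    exact_mod_cast (by linarith : Real.log (rumProb f θ (D i0)) < L0)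
  have hge : logLik f D 0 ≤ logLik f D θ := hθmax 0 rfl
  rw [hL0] at hge
  exact absurd (lt_of_le_of_lt (hge.trans hub) hlt) (lt_irrefl _)
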